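/- Let 0 < a < b and n ≥ 1, and let x₀ < x₁ < ⋯ < x_n be the points of the Chebyshev alternance for p_{n,a,b} − 1. Then, with ε = ε(n,a,b), the signs are determined: p_{n,a,b}(x_j) = 1 − (−1)^j ε for all j = 0,…,n; in particular p_{n,a,b}(a) = 1 − ε. -/

import Mathlib

/-- `oddPoly n α` is the odd polynomial `α 0 * x + α 1 * x^3 + ⋯ + α (n-1) * x^(2n-1)`.
The functions of this form are exactly the elements of the space `L_n` of odd
polynomials of degree at most `2n-1`. -/
noncomputable def oddPoly (n : ℕ) (α : ℕ → ℝ) : ℝ → ℝ :=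
  fun x => ∑ i ∈ Finset.range n, α i * x ^ (2 * i + 1)

/-- The uniform (Chebyshev) distance `‖f − g‖_{C[a,b]} = sup_{x ∈ [a,b]} |f x − g x|`. -/
noncomputable def unifErr (a b : ℝ) (f g : ℝ → ℝ) : ℝ :=
  sSup ((fun x => |f x - g x|) '' Set.Icc a b)

open Polynomial


theorem posRoots_toFinset_le (p : ℝ[X]) :
    (p.roots.filter (fun r => 0 < r)).toFinset.card ≤
      (((derivative p).roots.filter (fun r => 0 < r)).toFinset \
        (p.roots.filter (fun r => 0 < r)).toFinset).card + 1 := by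
  rcases eq_or_ne (derivative p) 0 with hp' | hp'
  · rw [eq_C_of_derivative_eq_zero hp', roots_C]
    simp
  have hp : p ≠ 0 := ne_of_apply_ne derivative (by rwa [derivative_zero])
  refine Finset.card_le_diff_of_interleaved fun x hx y hy hxy hxy' => ?_
  rw [Multiset.mem_toFinset, Multiset.mem_filter, mem_roots hp] at hx hy
  obtain ⟨z, hz1, hz2⟩ := exists_deriv_eq_zero hxy p.continuousOn (hx.1.trans hy.1.symm)
  refine ⟨z, ?_, hz1⟩
  rw [Multiset.mem_toFinset, Multiset.mem_filter, mem_roots hp']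
  exact ⟨by rwa [IsRoot, ← p.deriv], hx.2.trans hz1.1⟩

theorem posRoots_card_le (p : ℝ[X]) :
    Multiset.card (p.roots.filter (fun r => 0 < r)) ≤
      Multiset.card ((derivative p).roots.filter (fun r => 0 < r)) + 1 := by
  set s := p.roots.filter (fun r => 0 < r) with hs
  set s' := (derivative p).roots.filter (fun r => 0 < r) with hs'
  have hcount : ∀ x ∈ s.toFinset, s.count x = p.rootMultiplicity x := by
    intro x hx
    rw [Multiset.mem_toFinset, hs, Multiset.mem_filter] at hx
    rw [hs, Multiset.count_filter_of_pos hx.2, count_roots]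
  have hcount' : ∀ x : ℝ, 0 < x → s'.count x = (derivative p).rootMultiplicity x := by
    intro x hx
    rw [hs', Multiset.count_filter_of_pos hx, count_roots]
  have hposs : ∀ x ∈ s.toFinset, (0:ℝ) < x := fun x hx =>
    (Multiset.mem_filter.1 (Multiset.mem_toFinset.1 hx)).2
  calc
    Multiset.card s = ∑ x ∈ s.toFinset, s.count x := (Multiset.toFinset_sum_count_eq _).symm
    _ = ∑ x ∈ s.toFinset, (s.count x - 1 + 1) :=
      (Eq.symm <| Finset.sum_congr rfl fun _ hx => tsub_add_cancel_of_le <|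
        Nat.succ_le_iff.2 <| Multiset.count_pos.2 <| Multiset.mem_toFinset.1 hx)
    _ = (∑ x ∈ s.toFinset, (s.count x - 1)) + s.toFinset.card := by
      simp only [Finset.sum_add_distrib, Finset.card_eq_sum_ones]
    _ ≤ (∑ x ∈ s.toFinset, s'.count x) + ((s'.toFinset \ s.toFinset).card + 1) := by
      refine add_le_add (Finset.sum_le_sum fun x hx => ?_) (posRoots_toFinset_le p)
      rw [hcount x hx, hcount' x (hposs x hx)]
      exact rootMultiplicity_sub_one_le_derivative_rootMultiplicity _ _
    _ ≤ (∑ x ∈ s.toFinset, s'.count x) +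
          ((∑ x ∈ s'.toFinset \ s.toFinset, s'.count x) + 1) := by
      refine add_le_add le_rfl (add_le_add ((Finset.card_eq_sum_ones _).trans_le ?_) le_rfl)
      refine Finset.sum_le_sum fun x hx => Nat.succ_le_iff.2 ?_
      rw [Multiset.count_pos, ← Multiset.mem_toFinset]
      exact (Finset.mem_sdiff.1 hx).1
    _ = Multiset.card s' + 1 := by
      rw [← add_assoc, ← Finset.sum_union Finset.disjoint_sdiff,
        Finset.union_sdiff_self_eq_union, ← Multiset.toFinset_sum_count_eq,
        ← Finset.sum_subset Finset.subset_union_right]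
      intro x _ hx₂
      simpa only [Multiset.mem_toFinset, Multiset.count_eq_zero] using hx₂

theorem fewnomial_aux : ∀ N : ℕ, ∀ p : ℝ[X], p ≠ 0 → p.natDegree ≤ N →
    Multiset.card (p.roots.filter (fun r => (0:ℝ) < r)) < p.support.card := by
  intro N
  induction N with
  | zero =>
    intro p hp hd
    have hr : p.roots = 0 := by
      rw [eq_C_of_natDegree_le_zero hd]; exact roots_C _
    rw [hr]
    simpa using Finset.card_pos.2 (support_nonempty.2 hp)
  | succ N ih =>
    intro p hp hd
    by_cases h0 : p.coeff 0 = 0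
    · have hXg : X * p.divX = p := by
        have := X_mul_divX_add p
        rwa [h0, C_0, add_zero] at this
      have hgne : p.divX ≠ 0 := by
        intro h; rw [h, mul_zero] at hXg; exact hp hXg.symm
      have hgdeg : p.divX.natDegree ≤ N := by
        have := p.natDegree_divX_eq_natDegree_tsub_one
        omega
      have hroots : p.roots = X.roots + p.divX.roots := by
        conv_lhs => rw [← hXg]
        rw [roots_mul (by rw [hXg]; exact hp)]
      have hfilter : p.roots.filter (fun r => (0:ℝ) < r)
          = p.divX.roots.filter (fun r => (0:ℝ) < r) := by
        rw [hroots, Multiset.filter_add, roots_X, Multiset.filter_singleton]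
        simp
      have hsupp : p.divX.support.card ≤ p.support.card := by
        refine Finset.card_le_card_of_injOn (fun i => i + 1) ?_
          (fun i _ j _ h => Nat.succ_injective h)
        intro i hi
        simp only [Finset.mem_coe, mem_support_iff] at hi ⊢
        rwa [← coeff_divX]
      calc Multiset.card (p.roots.filter (fun r => (0:ℝ) < r))
          = Multiset.card (p.divX.roots.filter (fun r => (0:ℝ) < r)) := by rw [hfilter]
        _ < p.divX.support.card := ih _ hgne hgdeg
        _ ≤ p.support.card := hsupp
    · by_cases hd' : derivative p = 0
      · have hr : p.roots = 0 := by
          rw [eq_C_of_derivative_eq_zero hd']; exact roots_C _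
        rw [hr]
        simpa using Finset.card_pos.2 (support_nonempty.2 hp)
      · have hdnd : p.natDegree ≠ 0 := by
          intro h
          exact hd' (by rw [eq_C_of_natDegree_le_zero h.le, derivative_C])
        have hder : (derivative p).natDegree ≤ N := by
          have := natDegree_derivative_lt hdnd
          omega
        have hsupp : (derivative p).support.card < p.support.card := by
          have h1 : (derivative p).support.card ≤ (p.support.erase 0).card := by
            refine Finset.card_le_card_of_injOn (fun i => i + 1) ?_
              (fun i _ j _ h => Nat.succ_injective h)
            intro i hi
            rw [Finset.mem_coe, mem_support_iff, coeff_derivative] at hi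
            rw [Finset.mem_coe, Finset.mem_erase, mem_support_iff]
            exact ⟨Nat.succ_ne_zero i, fun h => hi (by rw [h, zero_mul])⟩
          have h2 : (p.support.erase 0).card < p.support.card :=
            Finset.card_erase_lt_of_mem (mem_support_iff.2 h0)
          omega
        calc Multiset.card (p.roots.filter (fun r => (0:ℝ) < r))
            ≤ Multiset.card ((derivative p).roots.filter (fun r => (0:ℝ) < r)) + 1 :=
              posRoots_card_le p
          _ < (derivative p).support.card + 1 :=
              Nat.add_lt_add_right (ih _ hd' hder) 1
          _ ≤ p.support.card := hsupp

theorem fewnomial (p : ℝ[X]) (hp : p ≠ 0) :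
    Multiset.card (p.roots.filter (fun r => (0:ℝ) < r)) < p.support.card :=
  fewnomial_aux p.natDegree p hp le_rfl

noncomputable def oddP (n : ℕ) (α : ℕ → ℝ) (c : ℝ) : ℝ[X] :=
  (∑ i ∈ Finset.range n, C (α i) * X ^ (2 * i + 1)) - C c

lemma oddP_eval (n : ℕ) (α : ℕ → ℝ) (c : ℝ) (y : ℝ) :
    (oddP n α c).eval y = oddPoly n α y - c := by
  simp [oddP, oddPoly, eval_finset_sum]

lemma oddPoly_zero (n : ℕ) (α : ℕ → ℝ) : oddPoly n α 0 = 0 :=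
  Finset.sum_eq_zero fun i _ => by rw [zero_pow (by omega), mul_zero]

lemma oddPoly_continuous (n : ℕ) (α : ℕ → ℝ) : Continuous (oddPoly n α) :=
  continuous_finset_sum _ fun i _ => continuous_const.mul (continuous_pow _)

lemma oddP_support_card (n : ℕ) (α : ℕ → ℝ) (c : ℝ) :
    (oddP n α c).support.card ≤ n + 1 := by
  have h1 : (oddP n α c).support ⊆
      insert 0 ((Finset.range n).image (fun i => 2 * i + 1)) := by
    intro m hm
    rw [mem_support_iff] at hm
    by_contra hmem
    simp only [Finset.mem_insert, Finset.mem_image, Finset.mem_range, not_or,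
      not_exists, not_and] at hmem
    apply hm
    simp only [oddP, coeff_sub, coeff_C, finset_sum_coeff, coeff_C_mul, coeff_X_pow]
    rw [if_neg hmem.1, Finset.sum_eq_zero, sub_zero]
    intro i hi
    rw [if_neg fun h => hmem.2 i (Finset.mem_range.1 hi) h.symm, mul_zero]
  calc (oddP n α c).support.card
      ≤ (insert 0 ((Finset.range n).image (fun i => 2 * i + 1))).card :=
        Finset.card_le_card h1
    _ ≤ ((Finset.range n).image (fun i => 2 * i + 1)).card + 1 :=
        Finset.card_insert_le _ _
    _ ≤ n + 1 := by
        have := Finset.card_image_le (s := Finset.range n) (f := fun i => 2 * i + 1)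
        simpa using this

/-- For the points `x₀ < ⋯ < x_n` of the Chebyshev alternance for
`p_{n,a,b} − 1`, the signs are determined: `p_{n,a,b}(x_j) = 1 − (−1)^j ε` where
`ε = ε(n,a,b)`; in particular `p_{n,a,b}(a) = 1 − ε`. -/
theorem alternance_signs (n : ℕ) (hn : 1 ≤ n) (a b : ℝ) (ha : 0 < a) (hab : a < b)
    (α : ℕ → ℝ)
    (hbest : ∀ β : ℕ → ℝ,
      unifErr a b (fun _ => (1:ℝ)) (oddPoly n α) ≤ unifErr a b (fun _ => (1:ℝ)) (oddPoly n β))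
    (x : Fin (n + 1) → ℝ) (hmono : StrictMono x) (hmem : ∀ j, x j ∈ Set.Icc a b)
    (habs : ∀ j, |oddPoly n α (x j) - 1| = unifErr a b (fun _ => (1:ℝ)) (oddPoly n α))
    (halt : ∀ j : Fin n,
      oddPoly n α (x j.succ) - 1 = -(oddPoly n α (x j.castSucc) - 1)) :
    (∀ j : Fin (n + 1), oddPoly n α (x j)
        = 1 - (-1 : ℝ) ^ (j : ℕ) * unifErr a b (fun _ => (1:ℝ)) (oddPoly n α)) ∧
    oddPoly n α a = 1 - unifErr a b (fun _ => (1:ℝ)) (oddPoly n α) := by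
  have hb0 : 0 < b := lt_trans ha hab
  have hcont : Continuous (oddPoly n α) := oddPoly_continuous n α
  set ε := unifErr a b (fun _ => (1:ℝ)) (oddPoly n α) with hε
  -- upper bound
  have hub : ∀ y ∈ Set.Icc a b, |oddPoly n α y - 1| ≤ ε := by
    intro y hy
    rw [abs_sub_comm, hε, unifErr]
    apply le_csSup
    · exact IsCompact.bddAbove_image isCompact_Icc
        ((continuous_const.sub hcont).abs.continuousOn)
    · exact ⟨y, hy, rfl⟩
  have hε0 : 0 ≤ ε := (habs 0) ▸ abs_nonneg _
  -- ε < 1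
  have hε1 : ε < 1 := by
    have hβ : unifErr a b (fun _ => (1:ℝ))
        (oddPoly n (fun i => if i = 0 then 1 / b else 0)) ≤ 1 - a / b := by
      apply Real.sSup_le
      · rintro z ⟨y, hy, rfl⟩
        have hy1 : oddPoly n (fun i => if i = 0 then 1 / b else 0) y = y / b := by
          rw [oddPoly, Finset.sum_eq_single 0]
          · rw [if_pos rfl]; ring
          · intro i _ hne; rw [if_neg hne, zero_mul]
          · intro h; exact absurd (Finset.mem_range.2 hn) h
        simp only [hy1]
        have h1 : y / b ≤ 1 := (div_le_one hb0).2 hy.2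
        have h2 : a / b ≤ y / b := by gcongr; exact hy.1
        rw [abs_of_nonneg (by linarith)]
        linarith
      · have h3 : a / b ≤ 1 := (div_le_one hb0).2 hab.le
        linarith
    have h4 : 0 < a / b := div_pos ha hb0
    calc ε ≤ 1 - a / b := le_trans (hbest _) hβ
      _ < 1 := by linarith
  -- alternating sign propagation
  have hsign : ∀ j : Fin (n + 1),
      oddPoly n α (x j) - 1 = (-1 : ℝ) ^ (j : ℕ) * (oddPoly n α (x 0) - 1) := by
    intro j
    induction j using Fin.induction with
    | zero => simp
    | succ j ih =>
      rw [halt j, ih]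
      simp only [Fin.coe_castSucc, Fin.val_succ, pow_succ]
      ring
  have hor : ∀ j : Fin (n + 1),
      oddPoly n α (x j) - 1 = ε ∨ oddPoly n α (x j) - 1 = -ε :=
    fun j => (abs_eq hε0).1 (habs j)
  -- the key sign determination
  have hx0 : oddPoly n α (x 0) - 1 = -ε := by
    rcases hor 0 with h | h
    · rcases hε0.lt_or_eq with hεpos | hεz
      · exfalso
        set Q := oddP n α 1 with hQdef
        have hQ0 : Q.eval 0 = -1 := by rw [oddP_eval, oddPoly_zero]; ring
        have hQne : Q ≠ 0 := by
          intro hz; rw [hz] at hQ0; simp at hQ0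
        have hx0pos : 0 < x 0 := lt_of_lt_of_le ha (hmem 0).1
        -- root in (0, x 0)
        obtain ⟨s, hsIoo, hs0⟩ :=
          intermediate_value_Ioo (le_of_lt hx0pos)
            ((hcont.sub continuous_const).continuousOn)
            (show (0:ℝ) ∈ Set.Ioo (oddPoly n α 0 - 1) (oddPoly n α (x 0) - 1) by
              rw [oddPoly_zero, h]; exact ⟨by norm_num, hεpos⟩)
        -- roots between alternance points
        have ht : ∀ j : Fin n, ∃ tj, tj ∈ Set.Ioo (x j.castSucc) (x j.succ) ∧
            oddPoly n α tj - 1 = 0 := by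
          intro j
          have hxx : x j.castSucc < x j.succ := hmono (Fin.castSucc_lt_succ : j.castSucc < j.succ)
          have hsucc : oddPoly n α (x j.succ) - 1 = -(oddPoly n α (x j.castSucc) - 1) :=
            halt j
          rcases hor j.castSucc with hj | hj
          · obtain ⟨tj, h1, h2⟩ :=
              intermediate_value_Ioo' (le_of_lt hxx)
                ((hcont.sub continuous_const).continuousOn)
                (show (0:ℝ) ∈ Set.Ioo (oddPoly n α (x j.succ) - 1)
                    (oddPoly n α (x j.castSucc) - 1) by
                  rw [hsucc, hj]; exact ⟨by linarith, hεpos⟩)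
            exact ⟨tj, h1, h2⟩
          · obtain ⟨tj, h1, h2⟩ :=
              intermediate_value_Ioo (le_of_lt hxx)
                ((hcont.sub continuous_const).continuousOn)
                (show (0:ℝ) ∈ Set.Ioo (oddPoly n α (x j.castSucc) - 1)
                    (oddPoly n α (x j.succ) - 1) by
                  rw [hsucc, hj]; exact ⟨by linarith, by linarith⟩)
            exact ⟨tj, h1, h2⟩
        choose t htIoo ht0 using ht
        have hts : ∀ j : Fin n, s < t j := fun j =>
          lt_trans (lt_of_lt_of_le hsIoo.2 (hmono.monotone (Fin.zero_le _))) (htIoo j).1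
        have htinj : Function.Injective t := by
          have htlt : ∀ j k : Fin n, j < k → t j < t k := by
            intro j k hjk
            have hle : j.succ ≤ k.castSucc := by
              rw [Fin.le_def]
              simp only [Fin.val_succ, Fin.coe_castSucc]
              exact Fin.lt_def.1 hjk
            exact lt_of_lt_of_le (htIoo j).2
              (le_trans (hmono.monotone hle) (htIoo k).1.le)
          intro j k hjk
          rcases lt_trichotomy j k with h' | h' | h'
          · exact absurd hjk (ne_of_lt (htlt j k h'))
          · exact h'
          · exact absurd hjk.symm (ne_of_lt (htlt k j h'))
        set S : Finset ℝ := insert s (Finset.image t Finset.univ) with hS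
        have hScard : S.card = n + 1 := by
          rw [hS, Finset.card_insert_of_notMem, Finset.card_image_of_injective _ htinj]
          · simp
          · intro hmem'
            obtain ⟨j, _, hj⟩ := Finset.mem_image.1 hmem'
            exact absurd hj (ne_of_gt (hts j))
        have hsub : S ⊆ (Q.roots.filter (fun r => (0:ℝ) < r)).toFinset := by
          intro z hz
          rw [Multiset.mem_toFinset, Multiset.mem_filter, mem_roots hQne]
          rcases Finset.mem_insert.1 hz with rfl | hz
          · exact ⟨by rw [IsRoot, oddP_eval]; exact hs0, hsIoo.1⟩
          · obtain ⟨j, _, rfl⟩ := Finset.mem_image.1 hz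
            exact ⟨by rw [IsRoot, oddP_eval]; exact ht0 j,
              lt_trans (lt_of_lt_of_le ha (hmem _).1) (htIoo j).1⟩
        have h1 : n + 1 ≤ (Q.roots.filter (fun r => (0:ℝ) < r)).toFinset.card :=
          hScard ▸ Finset.card_le_card hsub
        have h2 := Multiset.toFinset_card_le (Q.roots.filter (fun r => (0:ℝ) < r))
        have h3 := fewnomial Q hQne
        have h4 : Q.support.card ≤ n + 1 := oddP_support_card n α 1
        omega
      · rw [h, ← hεz, neg_zero]
    · exact h
  have part1 : ∀ j : Fin (n + 1), oddPoly n α (x j) = 1 - (-1 : ℝ) ^ (j : ℕ) * ε := by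
    intro j
    have hj := hsign j
    rw [hx0, mul_neg] at hj
    linarith
  refine ⟨part1, ?_⟩
  by_contra hne
  have hea : oddPoly n α a - 1 ≠ -ε := fun h => hne (by linarith)
  have haIcc : a ∈ Set.Icc a b := ⟨le_rfl, hab.le⟩
  have hub_a : |oddPoly n α a - 1| ≤ ε := hub a haIcc
  have hεpos : 0 < ε := by
    rcases hε0.lt_or_eq with h | h
    · exact h
    · exfalso
      apply hea
      rw [← h, neg_zero]
      exact abs_eq_zero.1 (le_antisymm (h ▸ hub_a) (abs_nonneg _))
  have heagt : -ε < oddPoly n α a - 1 :=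
    (neg_le_of_abs_le hub_a).lt_of_ne (Ne.symm hea)
  -- point in (0, a) where the error equals -ε
  obtain ⟨s, hsIoo, hs0⟩ :=
    intermediate_value_Ioo (le_of_lt ha)
      ((hcont.sub continuous_const).continuousOn)
      (show (-ε) ∈ Set.Ioo (oddPoly n α 0 - 1) (oddPoly n α a - 1) by
        rw [oddPoly_zero]; exact ⟨by linarith, heagt⟩)
  have hs0' : oddPoly n α s - 1 = -ε := hs0
  set Q := oddP n α (1 - ε) with hQdef
  have hQ0 : ∀ y, Q.eval y = oddPoly n α y - 1 + ε := by
    intro y; rw [hQdef, oddP_eval]; ring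
  have hQne : Q ≠ 0 := by
    intro hz
    have h0 := hQ0 0
    rw [hz, oddPoly_zero] at h0
    simp only [eval_zero] at h0
    linarith
  have hQnonneg : ∀ y ∈ Set.Icc a b, 0 ≤ Q.eval y := by
    intro y hy
    rw [hQ0]
    have := neg_le_of_abs_le (hub y hy)
    linarith
  have hax0 : a < x 0 := by
    rcases (hmem 0).1.lt_or_eq with h | h
    · exact h
    · exfalso
      apply hea
      rw [h]
      have := part1 0
      simp only [Fin.val_zero, pow_zero, one_mul] at this
      linarith
  -- the finset of even indices below n
  set J : Finset (Fin (n + 1)) :=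
    Finset.univ.filter (fun j => (j : ℕ) % 2 = 0 ∧ (j : ℕ) < n) with hJ
  open Fin.NatCast in
  have hJcard : (n + 1) / 2 ≤ J.card := by
    rw [← Finset.card_range ((n + 1) / 2)]
    apply Finset.card_le_card_of_injOn (fun k => ((2 * k : ℕ) : Fin (n + 1)))
    · intro k hk
      rw [Finset.mem_coe, Finset.mem_range] at hk
      have h2k : 2 * k < n + 1 := by omega
      rw [hJ, Finset.mem_coe, Finset.mem_filter]
      refine ⟨Finset.mem_univ _, ?_⟩
      rw [Fin.val_cast_of_lt h2k]
      omega
    · intro k hk l hl h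
      rw [Finset.mem_coe, Finset.mem_range] at hk hl
      have := congrArg Fin.val h
      rw [Fin.val_cast_of_lt (by omega), Fin.val_cast_of_lt (by omega)] at this
      omega
  have hmult : ∀ j ∈ J, 2 ≤ Q.rootMultiplicity (x j) := by
    intro j hj
    rw [hJ, Finset.mem_filter] at hj
    have heven : (-1 : ℝ) ^ (j : ℕ) = 1 :=
      Even.neg_one_pow (Nat.even_iff.2 hj.2.1)
    have hroot : Q.eval (x j) = 0 := by
      rw [hQ0]
      have := part1 j
      rw [heven, one_mul] at this
      linarith
    have hint : x j ∈ Set.Ioo a b := by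
      constructor
      · exact lt_of_lt_of_le hax0 (hmono.monotone (Fin.zero_le j))
      · have hjlast : j < Fin.last n := by
          rw [Fin.lt_def]
          exact hj.2.2
        exact lt_of_lt_of_le (hmono hjlast) (hmem (Fin.last n)).2
    have hlocmin : IsLocalMin (fun y => Q.eval y) (x j) := by
      have hnb : Set.Ioo a b ∈ nhds (x j) := isOpen_Ioo.mem_nhds hint
      filter_upwards [hnb] with y hy
      rw [hroot]
      exact hQnonneg y (Set.Ioo_subset_Icc_self hy)
    have hderiv : Q.derivative.eval (x j) = 0 := by
      have := hlocmin.deriv_eq_zero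
      rwa [Polynomial.deriv] at this
    exact (one_lt_rootMultiplicity_iff_isRoot hQne).2 ⟨hroot, hderiv⟩
  have hslt : ∀ j : Fin (n + 1), s < x j := fun j =>
    lt_of_lt_of_le hsIoo.2 (hmem j).1
  set m : Multiset ℝ := s ::ₘ (2 • (J.val.map x)) with hm
  have hle : m ≤ Q.roots.filter (fun r => (0:ℝ) < r) := by
    rw [Multiset.le_iff_count]
    intro r
    by_cases hrs : r = s
    · subst hrs
      have hcnt : m.count r = 1 := by
        rw [hm, Multiset.count_cons_self, Multiset.count_nsmul,
          Multiset.count_eq_zero.2, mul_zero]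
        intro hmem'
        obtain ⟨j, _, hj⟩ := Multiset.mem_map.1 hmem'
        exact absurd hj (ne_of_gt (hslt j))
      rw [hcnt, Multiset.count_filter_of_pos hsIoo.1, count_roots]
      refine (rootMultiplicity_pos hQne).2 ?_
      rw [IsRoot, hQ0]
      linarith [hs0']
    · by_cases hrJ : ∃ j ∈ J, x j = r
      · obtain ⟨j, hj, rfl⟩ := hrJ
        have hcnt : m.count (x j) = 2 := by
          rw [hm, Multiset.count_cons_of_ne (fun h => hrs h), Multiset.count_nsmul,
            Multiset.count_map_eq_count' x J.val hmono.injective,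
            Multiset.count_eq_one_of_mem J.nodup hj, mul_one]
        have hpos : (0:ℝ) < x j := lt_of_lt_of_le ha (hmem j).1
        rw [hcnt, Multiset.count_filter_of_pos hpos, count_roots]
        exact hmult j hj
      · have hcnt : m.count r = 0 := by
          rw [hm, Multiset.count_cons_of_ne hrs, Multiset.count_nsmul,
            Multiset.count_eq_zero.2, mul_zero]
          intro hmem'
          obtain ⟨j, hjv, hj⟩ := Multiset.mem_map.1 hmem'
          exact hrJ ⟨j, hjv, hj⟩
        rw [hcnt]
        exact Nat.zero_le _
  have hcard := Multiset.card_le_card hle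
  have hmcard : Multiset.card m = 2 * J.card + 1 := by
    rw [hm, Multiset.card_cons, Multiset.card_nsmul, Multiset.card_map, ← Finset.card_def]
  have hfew := fewnomial Q hQne
  have hsupp : Q.support.card ≤ n + 1 := oddP_support_card n α (1 - ε)
  omega
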